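/- Let k be a field of characteristic p > 0, let a ∈ k ∖ k^p, and let K be a field extension of k containing an element b with b^p = a. Let W_a(K) := {(x,y) ∈ K² : x + x^p + a·y^p = 0}, a subgroup of (K², +). Then the maps φ : W_a(K) → K, φ(x,y) = x + b·y, and ψ : K → W_a(K), ψ(t) = (−t^p, b^{-1}·(t + t^p)), are mutually inverse isomorphisms of abelian groups (in particular, ψ(t) does lie in W_a(K) for every t ∈ K). -/

import Mathlib

/-- **`W_a` becomes isomorphic to `𝔾ₐ` over `k(a^{1/p})`.**
Let `k` be a field of characteristic `p > 0`, `a ∈ k ∖ kᵖ`, and `K/k` a field extension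
containing `b` with `bᵖ = a`.  With `W_a(K) = {(x,y) ∈ K² : x + xᵖ + a yᵖ = 0}`, the maps
`φ(x,y) = x + b y` and `ψ(t) = (-tᵖ, b⁻¹ (t + tᵖ))` are mutually inverse isomorphisms of
abelian groups between `W_a(K)` and `(K, +)`; in particular `ψ(t) ∈ W_a(K)` for all `t`. -/
theorem Wa_iso_Ga_over_purely_inseparable {k K : Type*} [Field k] [Field K]
    (p : ℕ) (hp : 0 < p) [CharP k p] [Algebra k K]
    (a : k) (ha : ∀ c : k, c ^ p ≠ a) (b : K) (hb : b ^ p = algebraMap k K a) :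
    (∀ t : K, (-t ^ p, b⁻¹ * (t + t ^ p)) ∈
        {v : K × K | v.1 + v.1 ^ p + algebraMap k K a * v.2 ^ p = 0}) ∧
    (∀ t : K, (-t ^ p : K) + b * (b⁻¹ * (t + t ^ p)) = t) ∧
    (∀ v ∈ {v : K × K | v.1 + v.1 ^ p + algebraMap k K a * v.2 ^ p = 0},
      (-(v.1 + b * v.2) ^ p, b⁻¹ * ((v.1 + b * v.2) + (v.1 + b * v.2) ^ p)) = v) ∧
    (∀ v ∈ {v : K × K | v.1 + v.1 ^ p + algebraMap k K a * v.2 ^ p = 0},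
      ∀ v' ∈ {v : K × K | v.1 + v.1 ^ p + algebraMap k K a * v.2 ^ p = 0},
      (v + v').1 + b * (v + v').2 = (v.1 + b * v.2) + (v'.1 + b * v'.2)) ∧
    (∀ t t' : K,
      ((-(t + t') ^ p, b⁻¹ * ((t + t') + (t + t') ^ p)) : K × K)
        = (-t ^ p, b⁻¹ * (t + t ^ p)) + (-t' ^ p, b⁻¹ * (t' + t' ^ p))) := by
  haveI : NeZero p := ⟨hp.ne'⟩
  haveI hfact : Fact p.Prime := CharP.char_is_prime_of_pos k p
  haveI : CharP K p := charP_of_injective_algebraMap (algebraMap k K).injective p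
  have hb0 : b ≠ 0 := by
    rintro rfl
    refine ha 0 ((algebraMap k K).injective ?_)
    rw [map_pow, map_zero, ← hb, zero_pow hp.ne']
  have hneg : ∀ x : K, (-x) ^ p = -(x ^ p) := fun x => by
    have h := sub_pow_char (R := K) (p := p) (x := (0 : K)) (y := x)
    simpa [zero_pow hp.ne'] using h
  have hbinv : b * b⁻¹ = 1 := mul_inv_cancel₀ hb0
  have hmulpow : ∀ y : K, algebraMap k K a * (b⁻¹ * y) ^ p = y ^ p := fun y => by
    rw [mul_pow, ← hb, inv_pow]
    field_simp
  refine ⟨?_, ?_, ?_, ?_, ?_⟩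
  · intro t
    show (-t ^ p) + (-t ^ p) ^ p + algebraMap k K a * (b⁻¹ * (t + t ^ p)) ^ p = 0
    rw [hneg, hmulpow, add_pow_char]
    ring
  · intro t
    rw [← mul_assoc, hbinv]
    ring
  · rintro ⟨x, y⟩ hv
    simp only [Set.mem_setOf_eq] at hv
    have hxp : (x + b * y) ^ p = -x := by
      rw [add_pow_char, mul_pow, hb]
      linear_combination hv
    have hx : -(x + b * y) ^ p = x := by rw [hxp]; ring
    refine Prod.ext hx ?_
    show b⁻¹ * (x + b * y + (x + b * y) ^ p) = y
    rw [hxp]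
    field_simp
    ring
  · intro v _ v' _
    simp [Prod.fst_add, Prod.snd_add]
    ring
  · intro t t'
    refine Prod.ext ?_ ?_
    · show -(t + t') ^ p = -t ^ p + -t' ^ p
      rw [add_pow_char]; ring
    · show b⁻¹ * (t + t' + (t + t') ^ p) = b⁻¹ * (t + t ^ p) + b⁻¹ * (t' + t' ^ p)
      rw [add_pow_char]; ring
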